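/- Let F be a Laplacian eigenfunction with eigenvalue zero on a metric graph with edge lengths l_1,…,l_E, so each component is affine: f_j(x) = α_j + β_j x. Then F satisfies the boundary conditions AF_bv + BF'_bv = 0 if and only if the vector v = C_-(𝒍;k)(α, β)^T is fixed by S(k)C(𝒍;k), i.e. S(k)C(𝒍;k)v = v, for one (equivalently any) real k ≠ 0; moreover the multiplicity of the eigenvalue 1 of S(k)C(𝒍;k) equals the dimension of the zero eigenspace of the Laplacian. -/

import Mathlib

open Matrix

/-- The edge S-matrix associated with boundary condition matrices A, B. -/
noncomputable def SAB {n : Type*} [Fintype n] [DecidableEq n]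
    (A B : Matrix n n ℂ) (k : ℂ) : Matrix n n ℂ :=
  -((A + (Complex.I * k) • B)⁻¹ * (A - (Complex.I * k) • B))

/-- C₊(𝒍;k), the block matrix (1, (i/k)1; 1, -(i/k)1 + D₁(𝒍)). -/
noncomputable def Cplus {E : ℕ} (l : Fin E → ℝ) (k : ℂ) :
    Matrix (Fin E ⊕ Fin E) (Fin E ⊕ Fin E) ℂ :=
  Matrix.fromBlocks 1 ((Complex.I / k) • 1) 1
    (-(Complex.I / k) • 1 + Matrix.diagonal fun j => (l j : ℂ))

/-- C₋(𝒍;k), the block matrix (1, -(i/k)1; 1, (i/k)1 + D₁(𝒍)). -/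
noncomputable def Cminus {E : ℕ} (l : Fin E → ℝ) (k : ℂ) :
    Matrix (Fin E ⊕ Fin E) (Fin E ⊕ Fin E) ℂ :=
  Matrix.fromBlocks 1 (-(Complex.I / k) • 1) 1
    ((Complex.I / k) • 1 + Matrix.diagonal fun j => (l j : ℂ))

/-- C(𝒍;k) := C₊(𝒍;k) C₋(𝒍;k)⁻¹. -/
noncomputable def Cmat {E : ℕ} (l : Fin E → ℝ) (k : ℂ) :
    Matrix (Fin E ⊕ Fin E) (Fin E ⊕ Fin E) ℂ :=
  Cplus l k * (Cminus l k)⁻¹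

namespace Stmt18Aux

open scoped ComplexOrder

/-- explicit inverse of `Cminus`. -/
noncomputable def Ninv {E : ℕ} (l : Fin E → ℝ) (k : ℂ) :
    Matrix (Fin E ⊕ Fin E) (Fin E ⊕ Fin E) ℂ :=
  Matrix.fromBlocks
    (Matrix.diagonal fun j => (Complex.I / k + l j) * (2 * (Complex.I / k) + l j)⁻¹)
    (Matrix.diagonal fun j => (Complex.I / k) * (2 * (Complex.I / k) + l j)⁻¹)
    (Matrix.diagonal fun j => -(2 * (Complex.I / k) + l j)⁻¹)
    (Matrix.diagonal fun j => (2 * (Complex.I / k) + l j)⁻¹)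

lemma cminus_eq {E : ℕ} (l : Fin E → ℝ) (k : ℂ) :
    Cminus l k = Matrix.fromBlocks 1
      (Matrix.diagonal fun _ => -(Complex.I / k)) 1
      (Matrix.diagonal fun j => Complex.I / k + l j) := by
  rw [Cminus, Matrix.smul_one_eq_diagonal, Matrix.smul_one_eq_diagonal, Matrix.diagonal_add]

lemma cminus_mul_ninv {E : ℕ} (l : Fin E → ℝ) (k : ℝ) (hk : k ≠ 0) :
    Cminus l (k : ℂ) * Ninv l (k : ℂ) = 1 := by
  have hk' : (k : ℂ) ≠ 0 := Complex.ofReal_ne_zero.mpr hk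
  rw [cminus_eq, Ninv, Matrix.fromBlocks_multiply, ← Matrix.fromBlocks_one,
    Matrix.fromBlocks_inj]
  refine ⟨?_, ?_, ?_, ?_⟩ <;>
  · ext i j
    rcases eq_or_ne i j with hij | hij
    · subst hij
      simp [Matrix.diagonal_apply, Matrix.one_apply]
      try field_simp
      try {
        have h3 : 2 * Complex.I + (l i : ℂ) * (k : ℂ) ≠ 0 := by
          intro he
          have him := congrArg Complex.im he
          simp at him
        first
        | (rw [div_eq_one_iff_eq h3]; ring)
        | (rw [div_eq_one_iff_eq (mul_ne_zero h3 hk')]; ring)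
        | (rw [div_eq_one_iff_eq]; ring; intro he; have him := congrArg Complex.im he; simp at him)
        | simp
        | (left; ring)
        | (right; ring) }
    · simp [Matrix.diagonal_apply, Matrix.one_apply, hij]

lemma ninv_mul_cminus {E : ℕ} (l : Fin E → ℝ) (k : ℝ) (hk : k ≠ 0) :
    Ninv l (k : ℂ) * Cminus l (k : ℂ) = 1 := by
  have hk' : (k : ℂ) ≠ 0 := Complex.ofReal_ne_zero.mpr hk
  rw [cminus_eq, Ninv, Matrix.fromBlocks_multiply, ← Matrix.fromBlocks_one,
    Matrix.fromBlocks_inj]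
  refine ⟨?_, ?_, ?_, ?_⟩ <;>
  · ext i j
    rcases eq_or_ne i j with hij | hij
    · subst hij
      simp [Matrix.diagonal_apply, Matrix.one_apply]
      try field_simp
      try {
        have h3 : 2 * Complex.I + (l i : ℂ) * (k : ℂ) ≠ 0 := by
          intro he
          have him := congrArg Complex.im he
          simp at him
        first
        | (rw [div_eq_one_iff_eq h3]; ring)
        | (rw [div_eq_one_iff_eq (mul_ne_zero h3 hk')]; ring)
        | (rw [div_eq_one_iff_eq]; ring; intro he; have him := congrArg Complex.im he; simp at him)
        | simp
        | (left; ring)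
        | (right; ring) }
    · simp [Matrix.diagonal_apply, Matrix.one_apply, hij]

noncomputable def cminusInvertible {E : ℕ} (l : Fin E → ℝ) (k : ℝ) (hk : k ≠ 0) :
    Invertible (Cminus l (k : ℂ)) :=
  ⟨Ninv l (k : ℂ), ninv_mul_cminus l k hk, cminus_mul_ninv l k hk⟩

lemma cmat_mul_cminus {E : ℕ} (l : Fin E → ℝ) (k : ℝ) (hk : k ≠ 0) :
    Cmat l (k : ℂ) * Cminus l (k : ℂ) = Cplus l (k : ℂ) := by
  have := cminusInvertible l k hk
  rw [Cmat, Matrix.mul_assoc, Matrix.nonsing_inv_mul _ (Matrix.isUnit_det_of_invertible _),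
    Matrix.mul_one]

lemma sum_eq {E : ℕ} (l : Fin E → ℝ) (k : ℂ) :
    Cplus l k + Cminus l k =
      (2 : ℂ) • Matrix.fromBlocks 1 0 1 (Matrix.diagonal fun j => (l j : ℂ)) := by
  ext (i | i) (j | j) <;>
    simp only [Cplus, Cminus, Matrix.add_apply, Matrix.smul_apply,
      Matrix.fromBlocks_apply₁₁, Matrix.fromBlocks_apply₁₂, Matrix.fromBlocks_apply₂₁,
      Matrix.fromBlocks_apply₂₂, Matrix.one_apply, Matrix.diagonal_apply,
      Matrix.zero_apply, Matrix.neg_apply, smul_eq_mul] <;>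
    split_ifs <;> ring

lemma diff_eq {E : ℕ} (l : Fin E → ℝ) (k : ℝ) (hk : k ≠ 0) :
    (Complex.I * (k : ℂ)) • (Cminus l (k : ℂ) - Cplus l (k : ℂ)) =
      (2 : ℂ) • Matrix.fromBlocks 0 1 0 (-1) := by
  have hk' : (k : ℂ) ≠ 0 := Complex.ofReal_ne_zero.mpr hk
  ext (i | i) (j | j) <;>
    simp only [Cplus, Cminus, Matrix.sub_apply, Matrix.smul_apply, Matrix.add_apply,
      Matrix.fromBlocks_apply₁₁, Matrix.fromBlocks_apply₁₂, Matrix.fromBlocks_apply₂₁,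
      Matrix.fromBlocks_apply₂₂, Matrix.one_apply, Matrix.diagonal_apply,
      Matrix.zero_apply, Matrix.neg_apply, smul_eq_mul] <;>
    split_ifs <;> field_simp <;> try (ring_nf; simp [Complex.I_sq]) <;> try ring
  all_goals simp

lemma isUnit_ABk {E : ℕ} (A B : Matrix (Fin E ⊕ Fin E) (Fin E ⊕ Fin E) ℂ)
    (hrank : (Matrix.fromCols A B).rank = Fintype.card (Fin E ⊕ Fin E))
    (hsa : (A * Bᴴ).IsHermitian) (k : ℝ) (hk : k ≠ 0) :
    IsUnit (A + (Complex.I * (k : ℂ)) • B) := by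
  set K : ℂ := Complex.I * (k : ℂ) with hKdef
  have hK : K ≠ 0 := mul_ne_zero Complex.I_ne_zero (Complex.ofReal_ne_zero.mpr hk)
  have hstarK : star K = -K := by
    rw [hKdef, star_mul', Complex.star_def, Complex.conj_I, Complex.conj_ofReal]
    ring
  -- joint injectivity from the rank assumption
  have hinj : Function.Injective (((Matrix.fromCols A B)ᴴ).mulVecLin) := by
    rw [← LinearMap.ker_eq_bot]
    have hrk : ((Matrix.fromCols A B)ᴴ).rank = Fintype.card (Fin E ⊕ Fin E) := by
      rw [Matrix.rank_conjTranspose]; exact hrank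
    have hadd := LinearMap.finrank_range_add_finrank_ker
      (((Matrix.fromCols A B)ᴴ).mulVecLin)
    rw [Module.finrank_pi] at hadd
    unfold Matrix.rank at hrk
    have hker0 : Module.finrank ℂ
        (LinearMap.ker (((Matrix.fromCols A B)ᴴ).mulVecLin)) = 0 := by omega
    exact Submodule.finrank_eq_zero.mp hker0
  have hij : ∀ x, Aᴴ *ᵥ x = 0 → Bᴴ *ᵥ x = 0 → x = 0 := by
    intro x hA hB
    apply hinj (a₂ := 0)
    rw [map_zero, Matrix.mulVecLin_apply,
      Matrix.conjTranspose_fromCols_eq_fromRows_conjTranspose,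
      Matrix.fromRows_mulVec, hA, hB]
    ext (i | i) <;> rfl
  -- injectivity of (A + K • B)ᴴ
  have hinj2 : ∀ x, (A + K • B)ᴴ *ᵥ x = 0 → x = 0 := by
    intro x hx
    rw [Matrix.conjTranspose_add, Matrix.conjTranspose_smul, hstarK,
      Matrix.add_mulVec, Matrix.smul_mulVec] at hx
    set y := Bᴴ *ᵥ x with hy
    have hA : Aᴴ *ᵥ x = K • y := by
      have := hx
      rw [add_eq_zero_iff_eq_neg] at this
      rw [this, neg_smul, neg_neg]
    have hz : star x ⬝ᵥ ((A * Bᴴ) *ᵥ x) = -K * (star y ⬝ᵥ y) := by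
      rw [← Matrix.mulVec_mulVec, Matrix.dotProduct_mulVec]
      have hsx : star x ᵥ* A = star (Aᴴ *ᵥ x) := by
        rw [Matrix.star_mulVec, Matrix.conjTranspose_conjTranspose]
      rw [hsx, hA, star_smul, hstarK, smul_dotProduct, smul_eq_mul]
    have hz2 : star (star x ⬝ᵥ ((A * Bᴴ) *ᵥ x)) = star x ⬝ᵥ ((A * Bᴴ) *ᵥ x) := by
      rw [← Matrix.star_dotProduct, Matrix.star_mulVec, hsa.eq,
        ← Matrix.dotProduct_mulVec]
    have hstars : star (star y ⬝ᵥ y) = star y ⬝ᵥ y := (Matrix.star_dotProduct y y).symm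
    have hs : star y ⬝ᵥ y = 0 := by
      rw [hz] at hz2
      rw [star_mul', star_neg, hstarK, neg_neg, hstars] at hz2
      have h2K : (2 * K) * (star y ⬝ᵥ y) = 0 := by linear_combination hz2
      rcases mul_eq_zero.mp h2K with h | h
      · exact absurd h (by simpa using hK)
      · exact h
    have hy0 : y = 0 := dotProduct_star_self_eq_zero.mp hs
    exact hij x (by rw [hA, hy0, smul_zero]) hy0
  have hinj3 : Function.Injective ((A + K • B)ᴴ).mulVec := by
    intro u v huv
    have h0 : (A + K • B)ᴴ *ᵥ (u - v) = 0 := by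
      rw [Matrix.mulVec_sub, huv, sub_self]
    exact sub_eq_zero.mp (hinj2 _ h0)
  exact (Matrix.isUnit_conjTranspose _).mp (Matrix.mulVec_injective_iff_isUnit.mp hinj3)

lemma keysum {E : ℕ} (A B : Matrix (Fin E ⊕ Fin E) (Fin E ⊕ Fin E) ℂ)
    (l : Fin E → ℝ) (k : ℝ) (hk : k ≠ 0) :
    (A - (Complex.I * (k : ℂ)) • B) * Cplus l (k : ℂ)
      + (A + (Complex.I * (k : ℂ)) • B) * Cminus l (k : ℂ) =
    (2 : ℂ) • (A * Matrix.fromBlocks 1 0 1 (Matrix.diagonal fun j => (l j : ℂ))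
      + B * Matrix.fromBlocks 0 1 0 (-1)) := by
  have e1 : A * (Cplus l (k : ℂ) + Cminus l (k : ℂ))
      = (2 : ℂ) • (A * Matrix.fromBlocks 1 0 1 (Matrix.diagonal fun j => (l j : ℂ))) := by
    rw [sum_eq, Matrix.mul_smul]
  have e2 : (Complex.I * (k : ℂ)) • (B * (Cminus l (k : ℂ) - Cplus l (k : ℂ)))
      = (2 : ℂ) • (B * Matrix.fromBlocks 0 1 0 (-1)) := by
    rw [← Matrix.mul_smul, diff_eq l k hk, Matrix.mul_smul]
  calc (A - (Complex.I * (k : ℂ)) • B) * Cplus l (k : ℂ)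
      + (A + (Complex.I * (k : ℂ)) • B) * Cminus l (k : ℂ)
      = A * (Cplus l (k : ℂ) + Cminus l (k : ℂ))
        + (Complex.I * (k : ℂ)) • (B * (Cminus l (k : ℂ) - Cplus l (k : ℂ))) := by
        simp only [sub_mul, add_mul, Matrix.smul_mul, Matrix.mul_add, Matrix.mul_sub,
          smul_sub]
        abel
    _ = (2 : ℂ) • (A * Matrix.fromBlocks 1 0 1 (Matrix.diagonal fun j => (l j : ℂ)))
        + (2 : ℂ) • (B * Matrix.fromBlocks 0 1 0 (-1)) := by rw [e1, e2]
    _ = _ := (smul_add _ _ _).symm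

lemma core {E : ℕ} (A B : Matrix (Fin E ⊕ Fin E) (Fin E ⊕ Fin E) ℂ)
    (l : Fin E → ℝ) (k : ℝ) (hk : k ≠ 0)
    (hU : IsUnit (A + (Complex.I * (k : ℂ)) • B)) :
    (A + (Complex.I * (k : ℂ)) • B)
        * (SAB A B (k : ℂ) * Cmat l (k : ℂ) * Cminus l (k : ℂ) - Cminus l (k : ℂ)) =
      (-2 : ℂ) • (A * Matrix.fromBlocks 1 0 1 (Matrix.diagonal fun j => (l j : ℂ))
        + B * Matrix.fromBlocks 0 1 0 (-1)) := by
  have hSid : (A + (Complex.I * (k : ℂ)) • B) * SAB A B (k : ℂ)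
      = -(A - (Complex.I * (k : ℂ)) • B) := by
    rw [SAB, mul_neg, ← Matrix.mul_assoc,
      Matrix.mul_nonsing_inv _ ((Matrix.isUnit_iff_isUnit_det _).mp hU), Matrix.one_mul]
  calc (A + (Complex.I * (k : ℂ)) • B)
      * (SAB A B (k : ℂ) * Cmat l (k : ℂ) * Cminus l (k : ℂ) - Cminus l (k : ℂ))
      = ((A + (Complex.I * (k : ℂ)) • B) * SAB A B (k : ℂ))
          * (Cmat l (k : ℂ) * Cminus l (k : ℂ))
        - (A + (Complex.I * (k : ℂ)) • B) * Cminus l (k : ℂ) := by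
        rw [Matrix.mul_sub]
        congr 1
        simp only [Matrix.mul_assoc]
    _ = -(A - (Complex.I * (k : ℂ)) • B) * Cplus l (k : ℂ)
        - (A + (Complex.I * (k : ℂ)) • B) * Cminus l (k : ℂ) := by
        rw [hSid, cmat_mul_cminus l k hk]
    _ = -((A - (Complex.I * (k : ℂ)) • B) * Cplus l (k : ℂ)
        + (A + (Complex.I * (k : ℂ)) • B) * Cminus l (k : ℂ)) := by
        rw [Matrix.neg_mul]
        abel
    _ = -((2 : ℂ) • (A * Matrix.fromBlocks 1 0 1 (Matrix.diagonal fun j => (l j : ℂ))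
        + B * Matrix.fromBlocks 0 1 0 (-1))) := by rw [keysum A B l k hk]
    _ = _ := by rw [← neg_smul]

end Stmt18Aux

/-- an affine function F (components f_j(x) = α_j + β_j x) satisfies the
boundary conditions A F_bv + B F'_bv = 0 iff v = C₋(𝒍;k)(α,β)ᵀ is fixed by
S(k)C(𝒍;k), for any real k ≠ 0; moreover the multiplicity of the eigenvalue 1 of
S(k)C(𝒍;k) equals the dimension of the zero eigenspace of the Laplacian (the space
of pairs (α,β) satisfying the boundary conditions). -/
theorem stmt_18 (E : ℕ) (A B : Matrix (Fin E ⊕ Fin E) (Fin E ⊕ Fin E) ℂ)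
    (hrank : (Matrix.fromCols A B).rank = Fintype.card (Fin E ⊕ Fin E))
    (hsa : (A * Bᴴ).IsHermitian)
    (l : Fin E → ℝ) (hl : ∀ j, 0 < l j)
    (k : ℝ) (hk : k ≠ 0) :
    (∀ α β : Fin E → ℂ,
      A *ᵥ (Sum.elim α fun j => α j + β j * (l j : ℂ))
        + B *ᵥ (Sum.elim β fun j => -β j) = 0 ↔
      (SAB A B (k : ℂ) * Cmat l (k : ℂ)) *ᵥ (Cminus l (k : ℂ) *ᵥ Sum.elim α β)
        = Cminus l (k : ℂ) *ᵥ Sum.elim α β) ∧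
    Module.finrank ℂ
        (Module.End.eigenspace (SAB A B (k : ℂ) * Cmat l (k : ℂ)).mulVecLin 1) =
      Module.finrank ℂ
        (LinearMap.ker ((A * Matrix.fromBlocks 1 0 1 (Matrix.diagonal fun j => (l j : ℂ))
          + B * Matrix.fromBlocks 0 1 0 (-1)).mulVecLin)) := by
  open Stmt18Aux in
  have hU : IsUnit (A + (Complex.I * (k : ℂ)) • B) := Stmt18Aux.isUnit_ABk A B hrank hsa k hk
  set M : Matrix (Fin E ⊕ Fin E) (Fin E ⊕ Fin E) ℂ :=
    A * Matrix.fromBlocks 1 0 1 (Matrix.diagonal fun j => (l j : ℂ))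
      + B * Matrix.fromBlocks 0 1 0 (-1) with hM
  have hcore := Stmt18Aux.core A B l k hk hU
  have hiff : ∀ w : (Fin E ⊕ Fin E) → ℂ, M *ᵥ w = 0 ↔
      (SAB A B (k : ℂ) * Cmat l (k : ℂ)) *ᵥ (Cminus l (k : ℂ) *ᵥ w)
        = Cminus l (k : ℂ) *ᵥ w := by
    intro w
    rw [Matrix.mulVec_mulVec]
    rw [show ((SAB A B (k : ℂ) * Cmat l (k : ℂ) * Cminus l (k : ℂ)) *ᵥ w
          = Cminus l (k : ℂ) *ᵥ w)
        ↔ ((SAB A B (k : ℂ) * Cmat l (k : ℂ) * Cminus l (k : ℂ)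
          - Cminus l (k : ℂ)) *ᵥ w = 0) by rw [Matrix.sub_mulVec, sub_eq_zero]]
    constructor
    · intro h
      have : (A + (Complex.I * (k : ℂ)) • B) *ᵥ ((SAB A B (k : ℂ) * Cmat l (k : ℂ)
          * Cminus l (k : ℂ) - Cminus l (k : ℂ)) *ᵥ w) = 0 := by
        rw [Matrix.mulVec_mulVec, hcore, Matrix.smul_mulVec, h, smul_zero]
      have hinj := Matrix.mulVec_injective_iff_isUnit.mpr hU
      have h0 : (A + (Complex.I * (k : ℂ)) • B) *ᵥ (0 : (Fin E ⊕ Fin E) → ℂ) = 0 :=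
        Matrix.mulVec_zero _
      exact hinj (this.trans h0.symm)
    · intro h
      have h2 : (A + (Complex.I * (k : ℂ)) • B) *ᵥ ((SAB A B (k : ℂ) * Cmat l (k : ℂ)
          * Cminus l (k : ℂ) - Cminus l (k : ℂ)) *ᵥ w) = 0 := by
        rw [h, Matrix.mulVec_zero]
      rw [Matrix.mulVec_mulVec, hcore, Matrix.smul_mulVec] at h2
      have := smul_eq_zero.mp h2
      rcases this with h3 | h3
      · norm_num at h3
      · exact h3
  constructor
  · intro α β
    have hw : A *ᵥ (Sum.elim α fun j => α j + β j * (l j : ℂ))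
        + B *ᵥ (Sum.elim β fun j => -β j) = M *ᵥ (Sum.elim α β) := by
      have hF1 : Matrix.fromBlocks 1 0 1 (Matrix.diagonal fun j => (l j : ℂ))
          *ᵥ Sum.elim α β = Sum.elim α fun j => α j + β j * (l j : ℂ) := by
        rw [Matrix.fromBlocks_mulVec]
        funext i
        cases i with
        | inl i => simp
        | inr i => simp [Matrix.mulVec_diagonal, mul_comm]
      have hF2 : Matrix.fromBlocks (0 : Matrix (Fin E) (Fin E) ℂ) 1 0 (-1)
          *ᵥ Sum.elim α β = Sum.elim β fun j => -β j := by
        rw [Matrix.fromBlocks_mulVec]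
        funext i
        cases i with
        | inl i => simp
        | inr i => simp [Matrix.neg_mulVec]
      rw [hM, Matrix.add_mulVec, ← Matrix.mulVec_mulVec, ← Matrix.mulVec_mulVec, hF1, hF2]
    rw [hw]
    exact hiff _
  · have hInv := Stmt18Aux.cminusInvertible l k hk
    have hinjC : Function.Injective (Cminus l (k : ℂ)).mulVecLin := by
      have := Matrix.mulVec_injective_of_invertible (Cminus l (k : ℂ))
      simpa [Matrix.mulVecLin_apply, Function.Injective] using this
    have hset : Module.End.eigenspace (SAB A B (k : ℂ) * Cmat l (k : ℂ)).mulVecLin 1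
        = Submodule.map (Cminus l (k : ℂ)).mulVecLin (LinearMap.ker M.mulVecLin) := by
      ext v
      rw [Module.End.mem_eigenspace_iff, one_smul, Submodule.mem_map]
      constructor
      · intro hv
        have hCv : Cminus l (k : ℂ) *ᵥ (Stmt18Aux.Ninv l (k : ℂ) *ᵥ v) = v := by
          rw [Matrix.mulVec_mulVec, Stmt18Aux.cminus_mul_ninv l k hk, Matrix.one_mulVec]
        refine ⟨Stmt18Aux.Ninv l (k : ℂ) *ᵥ v, ?_, ?_⟩
        · rw [LinearMap.mem_ker, Matrix.mulVecLin_apply]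
          refine (hiff _).mpr ?_
          rw [hCv]
          rw [Matrix.mulVecLin_apply] at hv
          exact hv
        · rw [Matrix.mulVecLin_apply]
          exact hCv
      · rintro ⟨w, hwker, rfl⟩
        rw [Matrix.mulVecLin_apply, Matrix.mulVecLin_apply]
        exact (hiff w).mp (by rw [← Matrix.mulVecLin_apply]; exact LinearMap.mem_ker.mp hwker)
    rw [hset]
    exact (LinearEquiv.finrank_eq
      (Submodule.equivMapOfInjective _ hinjC (LinearMap.ker M.mulVecLin))).symm
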